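/- (Lemma 2 of the paper.) Fix n ≥ 1, λ > 0, γ > 0, nonnegative reals v_1, …, v_n, and κ ∈ ℝⁿ with κ ≠ 0; let I = {i : κ_i ≠ 0}. The probability vector p*(κ) given by p*(κ)_i = |κ_i|·√(v_i + nλγ) / ∑_{j=1}^n |κ_j|·√(v_j + nλγ) maximizes θ(κ, ·) over the probability simplex: for every p ∈ ℝⁿ with p_i ≥ 0, ∑_{i=1}^n p_i = 1 and p_i > 0 for all i ∈ I, one has θ(κ, p) ≤ θ(κ, p*(κ)). -/

import Mathlib

open scoped BigOperators

/-- Lemma 2 of the paper: The probability vector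
`p*(κ)ᵢ = |κᵢ|√(vᵢ+nλγ)/∑ⱼ|κⱼ|√(vⱼ+nλγ)` maximizes `θ(κ,·)` over the probability
simplex: for every probability vector `p` positive on `I = {i : κᵢ ≠ 0}`,
`θ(κ,p) ≤ θ(κ,p*(κ))`, where
`θ(κ,p) = nλγ(∑_{i∈I}κᵢ²)/(∑_{i∈I}κᵢ²(vᵢ+nλγ)/pᵢ)`. -/
theorem stmt15 (n : ℕ) (hn : 1 ≤ n)
    (v : Fin n → ℝ) (hv : ∀ i, 0 ≤ v i)
    (lam gam : ℝ) (hlam : 0 < lam) (hgam : 0 < gam)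
    (κ : Fin n → ℝ) (hκ : κ ≠ 0)
    (θ : (Fin n → ℝ) → ℝ)
    (hθ : ∀ p : Fin n → ℝ, θ p = (n : ℝ) * lam * gam *
        (∑ i ∈ Finset.univ.filter (fun i => κ i ≠ 0), κ i ^ 2) /
        (∑ i ∈ Finset.univ.filter (fun i => κ i ≠ 0),
          κ i ^ 2 * (v i + n * lam * gam) / p i))
    (pstar : Fin n → ℝ)
    (hpstar : ∀ i, pstar i = |κ i| * Real.sqrt (v i + n * lam * gam) /
        ∑ j, |κ j| * Real.sqrt (v j + n * lam * gam))
    (p : Fin n → ℝ) (hp0 : ∀ i, 0 ≤ p i) (hp1 : ∑ i, p i = 1)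
    (hpos : ∀ i, κ i ≠ 0 → 0 < p i) :
    θ p ≤ θ pstar := by
  classical
  set c : ℝ := (n : ℝ) * lam * gam with hc_def
  have hnpos : (0 : ℝ) < n := by exact_mod_cast Nat.lt_of_lt_of_le Nat.zero_lt_one hn
  have hc : 0 < c := by
    have := mul_pos (mul_pos hnpos hlam) hgam
    simpa [hc_def] using this
  have hvc : ∀ i, 0 < v i + c := fun i => by have := hv i; linarith
  set I : Finset (Fin n) := Finset.univ.filter (fun i => κ i ≠ 0) with hIdef
  obtain ⟨i0, hi0⟩ : ∃ i, κ i ≠ 0 := by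
    by_contra h; push_neg at h; exact hκ (funext h)
  have hi0I : i0 ∈ I := by simp [hIdef, hi0]
  set f : Fin n → ℝ := fun i => |κ i| * Real.sqrt (v i + c) with hf
  have hfpos : ∀ i ∈ I, 0 < f i := by
    intro i hi
    have hki : κ i ≠ 0 := by simpa [hIdef] using hi
    exact mul_pos (abs_pos.mpr hki) (Real.sqrt_pos.mpr (hvc i))
  set S : ℝ := ∑ j, f j with hSdef
  have hSI : S = ∑ i ∈ I, f i := by
    rw [hSdef]
    symm
    apply Finset.sum_subset (Finset.subset_univ _)
    intro j _ hj
    have : κ j = 0 := by simpa [hIdef] using hj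
    simp [hf, this]
  have hSpos : 0 < S := by
    rw [hSI]
    exact Finset.sum_pos' (fun i hi => (hfpos i hi).le) ⟨i0, hi0I, hfpos i0 hi0I⟩
  have hfsq : ∀ i ∈ I, f i ^ 2 = κ i ^ 2 * (v i + c) := by
    intro i _
    have h := Real.sq_sqrt (hvc i).le
    simp only [hf, mul_pow, sq_abs, h]
  -- denominator for pstar equals S^2
  have hDstar : (∑ i ∈ I, κ i ^ 2 * (v i + c) / pstar i) = S ^ 2 := by
    have : ∀ i ∈ I, κ i ^ 2 * (v i + c) / pstar i = f i * S := by
      intro i hi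
      have hps : pstar i = f i / S := by rw [hpstar i]
      rw [← hfsq i hi, hps]
      field_simp [(hfpos i hi).ne']
    rw [Finset.sum_congr rfl this, ← Finset.sum_mul, ← hSI, sq]
  -- Cauchy-Schwarz (Sedrakyan) bound
  have hpI : ∀ i ∈ I, 0 < p i := by
    intro i hi
    exact hpos i (by simpa [hIdef] using hi)
  have hsumpI : ∑ i ∈ I, p i ≤ 1 := by
    rw [← hp1]
    exact Finset.sum_le_sum_of_subset_of_nonneg (Finset.subset_univ _)
      (fun i _ _ => hp0 i)
  have hsumpIpos : 0 < ∑ i ∈ I, p i := Finset.sum_pos hpI ⟨i0, hi0I⟩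
  have hCS : S ^ 2 ≤ ∑ i ∈ I, κ i ^ 2 * (v i + c) / p i := by
    have h1 : (∑ i ∈ I, f i) ^ 2 / (∑ i ∈ I, p i) ≤ ∑ i ∈ I, f i ^ 2 / p i :=
      Finset.sq_sum_div_le_sum_sq_div I f hpI
    have h2 : S ^ 2 ≤ S ^ 2 / (∑ i ∈ I, p i) := by
      rw [le_div_iff₀ hsumpIpos]
      nlinarith [sq_nonneg S]
    calc S ^ 2 ≤ S ^ 2 / (∑ i ∈ I, p i) := h2
      _ ≤ ∑ i ∈ I, f i ^ 2 / p i := by rw [hSI]; exact h1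
      _ = ∑ i ∈ I, κ i ^ 2 * (v i + c) / p i :=
        Finset.sum_congr rfl fun i hi => by rw [hfsq i hi]
  have hA : 0 ≤ (n : ℝ) * lam * gam * ∑ i ∈ I, κ i ^ 2 := by
    have : (0:ℝ) ≤ ∑ i ∈ I, κ i ^ 2 :=
      Finset.sum_nonneg fun i _ => sq_nonneg _
    positivity
  rw [hθ p, hθ pstar]
  rw [show ∑ i ∈ Finset.univ.filter (fun i => κ i ≠ 0),
      κ i ^ 2 * (v i + ↑n * lam * gam) / pstar i = S ^ 2 from hDstar]
  have hDp : S ^ 2 ≤ ∑ i ∈ Finset.univ.filter (fun i => κ i ≠ 0),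
      κ i ^ 2 * (v i + ↑n * lam * gam) / p i := hCS
  gcongr
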